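/- Let H be a unital RKHA and φ : S → X with pullback isometry T_φ : H(k∘φ) → H. Then T_φ*(1) is a multiplicative unit of H(k∘φ): for all f ∈ H(k∘φ), T_φ*(1) · f = f. -/

import Mathlib

open scoped ComplexInnerProductSpace

noncomputable section

/-- An abstract Hilbert tensor product structure: a bilinear map `tmul` whose
elementary tensors satisfy the inner product identity
`⟪a ⊗ b, c ⊗ d⟫ = ⟪a, c⟫ ⟪b, d⟫` and whose elementary tensors span a dense subspace. -/
structure TensorLike (H K HT : Type*) [NormedAddCommGroup H] [InnerProductSpace ℂ H]
    [NormedAddCommGroup K] [InnerProductSpace ℂ K]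
    [NormedAddCommGroup HT] [InnerProductSpace ℂ HT] where
  tmul : H →ₗ[ℂ] K →ₗ[ℂ] HT
  inner_tmul : ∀ (a c : H) (b d : K),
    ⟪tmul a b, tmul c d⟫ = ⟪a, c⟫ * ⟪b, d⟫
  dense_span : Dense (Submodule.span ℂ (Set.range fun p : H × K => tmul p.1 p.2) : Set HT)

/-- if `H` is a unital RKHA and `T_φ : H(k∘φ) → H` is the pullback isometry,
then `T_φ*(1)` is a multiplicative unit for the pullback: `T_φ*(1) · f = f`. -/
theorem stmt_7 {X S H Hφ : Type*}
    [NormedAddCommGroup H] [InnerProductSpace ℂ H] [CompleteSpace H]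
    [NormedAddCommGroup Hφ] [InnerProductSpace ℂ Hφ] [CompleteSpace Hφ]
    (k : X → H) (one : H) (hone : ∀ x, ⟪k x, one⟫ = 1)
    (φ : S → X) (kφ : S → Hφ)
    (hdense : Dense (Submodule.span ℂ (Set.range kφ) : Set Hφ))
    (Tφ : Hφ →L[ℂ] H) (hiso : ∀ f, ‖Tφ f‖ = ‖f‖)
    (hTφ : ∀ s, Tφ (kφ s) = k (φ s))
    (m : Hφ →L[ℂ] Hφ →L[ℂ] Hφ)
    (hm : ∀ f g s, ⟪kφ s, m f g⟫ = ⟪kφ s, f⟫ * ⟪kφ s, g⟫) :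
    ∀ f : Hφ, m (ContinuousLinearMap.adjoint Tφ one) f = f := by
  intro f
  have key : ∀ s, ⟪kφ s, m (ContinuousLinearMap.adjoint Tφ one) f - f⟫ = 0 := by
    intro s
    rw [inner_sub_right, hm]
    have : ⟪kφ s, (ContinuousLinearMap.adjoint Tφ) one⟫ = 1 := by
      rw [ContinuousLinearMap.adjoint_inner_right, hTφ, hone]
    rw [this, one_mul, sub_self]
  set v := m (ContinuousLinearMap.adjoint Tφ one) f - f with hv
  have horth : ∀ w ∈ Submodule.span ℂ (Set.range kφ), ⟪w, v⟫ = 0 := by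
    intro w hw
    induction hw using Submodule.span_induction with
    | mem x hx => obtain ⟨s, rfl⟩ := hx; exact key s
    | zero => simp
    | add x y _ _ hx hy => rw [inner_add_left, hx, hy, add_zero]
    | smul c x _ hx => rw [inner_smul_left, hx, mul_zero]
  have hv0 : v = 0 :=
    hdense.eq_zero_of_inner_right ℂ (fun w hw => horth w hw)
  exact sub_eq_zero.mp hv0
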